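/- Let σ : ℝ → ℝ be the 2-periodic odd function determined by σ(x) = 1 for 0 < x < 1 and σ(0) = σ(1) = 0 (hence σ(x) = −1 for −1 < x < 0). Then for every x ∈ (−1, 1), the series Σ_{n=1}^{∞} 2^{−(n+1)} σ(2ⁿ·x) converges and x = (1/2)·σ(x) − Σ_{n=1}^{∞} 2^{−(n+1)} σ(2ⁿ·x). -/

import Mathlib

/-- The `2`-periodic sawtooth with mean value `0` at odd integers. -/
noncomputable def gSaw (y : ℝ) : ℝ :=
  if Int.fract ((y + 1) / 2) = 0 then 0 else 2 * Int.fract ((y + 1) / 2) - 1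

lemma gSaw_periodic : Function.Periodic gSaw 2 := by
  intro y
  unfold gSaw
  have h : (y + 2 + 1) / 2 = (y + 1) / 2 + 1 := by ring
  rw [h, Int.fract_add_one]

lemma gSaw_eq_self {y : ℝ} (h1 : -1 < y) (h2 : y < 1) : gSaw y = y := by
  unfold gSaw
  have hf : Int.fract ((y + 1) / 2) = (y + 1) / 2 :=
    Int.fract_eq_self.2 ⟨by linarith, by linarith⟩
  rw [hf, if_neg (by intro h; nlinarith)]
  ring

lemma gSaw_neg_one : gSaw (-1) = 0 := by
  unfold gSaw
  norm_num

lemma gSaw_one : gSaw 1 = 0 := by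
  unfold gSaw
  norm_num

lemma gSaw_abs_le (y : ℝ) : |gSaw y| ≤ 1 := by
  unfold gSaw
  split
  · simp
  · have h0 := Int.fract_nonneg ((y + 1) / 2)
    have h1 := Int.fract_lt_one ((y + 1) / 2)
    rw [abs_le]; constructor <;> linarith

section Main

variable (σ : ℝ → ℝ) (hper : Function.Periodic σ 2)
    (hodd : ∀ x, σ (-x) = -σ x)
    (hpos : ∀ x : ℝ, 0 < x → x < 1 → σ x = 1)
    (h0 : σ 0 = 0) (h1 : σ 1 = 0)

include hper hodd hpos h0 h1

lemma sigma_neg : ∀ x : ℝ, -1 < x → x < 0 → σ x = -1 := by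
  intro x hx1 hx2
  have h := hodd (-x)
  rw [neg_neg] at h
  rw [h, hpos (-x) (by linarith) (by linarith)]

lemma sigma_neg_one : σ (-1) = 0 := by
  rw [hodd 1, h1, neg_zero]

lemma sigma_two : σ 2 = 0 := by
  have := hper 0
  rw [zero_add] at this
  rw [this, h0]

lemma sigma_neg_two : σ (-2) = 0 := by
  rw [hodd 2, sigma_two σ hper hodd hpos h0 h1, neg_zero]

lemma sigma_high : ∀ x : ℝ, 1 < x → x < 2 → σ x = -1 := by
  intro x hx1 hx2
  have h := hper (x - 2)
  rw [sub_add_cancel] at h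
  rw [h, sigma_neg σ hper hodd hpos h0 h1 (x - 2) (by linarith) (by linarith)]

lemma sigma_low : ∀ x : ℝ, -2 < x → x < -1 → σ x = 1 := by
  intro x hx1 hx2
  have h := hper x
  rw [← h, hpos (x + 2) (by linarith) (by linarith)]

lemma sigma_abs_le : ∀ y : ℝ, |σ y| ≤ 1 := by
  intro y
  obtain ⟨k, hk1, hk2⟩ : ∃ k : ℤ, (-1 : ℝ) ≤ y - k * 2 ∧ y - k * 2 < 1 := by
    refine ⟨⌊(y + 1) / 2⌋, ?_, ?_⟩
    · have := Int.floor_le ((y + 1) / 2); linarith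
    · have := Int.lt_floor_add_one ((y + 1) / 2); linarith
  have e : σ (y - k * 2) = σ y := hper.sub_int_mul_eq k
  set z := y - k * 2 with hz
  rw [← e]
  rcases eq_or_lt_of_le hk1 with h | h
  · rw [← h, sigma_neg_one σ hper hodd hpos h0 h1]; norm_num
  rcases lt_trichotomy z 0 with h' | h' | h'
  · rw [sigma_neg σ hper hodd hpos h0 h1 z h h']; norm_num
  · rw [h', h0]; norm_num
  · rw [hpos z h' hk2]; norm_num

lemma gSaw_rec_aux : ∀ x : ℝ, -1 ≤ x → x < 1 →
    gSaw x = (1 / 2) * σ x - (1 / 2) * σ (2 * x) + (1 / 2) * gSaw (2 * x) := by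
  intro x hx1 hx2
  have hGlo : ∀ y : ℝ, -2 < y → y < -1 → gSaw y = y + 2 := by
    intro y hy1 hy2
    rw [← gSaw_periodic y, gSaw_eq_self (by linarith) (by linarith)]
  have hGhi : ∀ y : ℝ, 1 < y → y < 2 → gSaw y = y - 2 := by
    intro y hy1 hy2
    have := gSaw_periodic (y - 2)
    rw [sub_add_cancel] at this
    rw [this, gSaw_eq_self (by linarith) (by linarith)]
  have hGneg2 : gSaw (-2) = 0 := by
    have := gSaw_periodic (-2)
    norm_num at this
    rw [← this, gSaw_eq_self (by norm_num) (by norm_num)]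
  rcases eq_or_lt_of_le hx1 with h | h
  · -- x = -1
    rw [← h]
    rw [gSaw_neg_one, sigma_neg_one σ hper hodd hpos h0 h1]
    norm_num [sigma_neg_two σ hper hodd hpos h0 h1, hGneg2]
  rcases lt_trichotomy x 0 with h' | h' | h'
  · -- x ∈ (-1, 0)
    rw [gSaw_eq_self h (by linarith), sigma_neg σ hper hodd hpos h0 h1 x h h']
    rcases lt_trichotomy (2 * x) (-1) with h2 | h2 | h2
    · rw [sigma_low σ hper hodd hpos h0 h1 (2 * x) (by linarith) h2,
        hGlo (2 * x) (by linarith) h2]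
      ring
    · rw [h2, sigma_neg_one σ hper hodd hpos h0 h1, gSaw_neg_one]
      linarith
    · rw [sigma_neg σ hper hodd hpos h0 h1 (2 * x) h2 (by linarith),
        gSaw_eq_self h2 (by linarith)]
      ring
  · -- x = 0
    rw [h']
    norm_num [h0, gSaw_eq_self (show (-1:ℝ) < 0 by norm_num) (by norm_num)]
  · -- x ∈ (0, 1)
    rw [gSaw_eq_self (by linarith) hx2, hpos x h' hx2]
    rcases lt_trichotomy (2 * x) 1 with h2 | h2 | h2
    · rw [hpos (2 * x) (by linarith) h2, gSaw_eq_self (by linarith) h2]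
      ring
    · rw [h2, h1, gSaw_one]
      linarith
    · rw [sigma_high σ hper hodd hpos h0 h1 (2 * x) h2 (by linarith),
        hGhi (2 * x) h2 (by linarith)]
      ring

lemma gSaw_rec : ∀ x : ℝ,
    gSaw x = (1 / 2) * σ x - (1 / 2) * σ (2 * x) + (1 / 2) * gSaw (2 * x) := by
  intro x
  obtain ⟨k, hk1, hk2⟩ : ∃ k : ℤ, (-1 : ℝ) ≤ x - k * 2 ∧ x - k * 2 < 1 := by
    refine ⟨⌊(x + 1) / 2⌋, ?_, ?_⟩
    · have := Int.floor_le ((x + 1) / 2); linarith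
    · have := Int.lt_floor_add_one ((x + 1) / 2); linarith
  have key := gSaw_rec_aux σ hper hodd hpos h0 h1 (x - k * 2) hk1 hk2
  have e1 : σ (x - k * 2) = σ x := hper.sub_int_mul_eq k
  have e2 : gSaw (x - k * 2) = gSaw x := gSaw_periodic.sub_int_mul_eq k
  have hd : 2 * (x - (k : ℝ) * 2) = 2 * x - ((2 * k : ℤ) : ℝ) * 2 := by
    push_cast; ring
  have e3 : σ (2 * (x - k * 2)) = σ (2 * x) := by
    rw [hd]; exact hper.sub_int_mul_eq (2 * k)
  have e4 : gSaw (2 * (x - k * 2)) = gSaw (2 * x) := by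
    rw [hd]; exact gSaw_periodic.sub_int_mul_eq (2 * k)
  rw [e1, e2, e3, e4] at key
  exact key

lemma gSaw_key : ∀ (N : ℕ) (x : ℝ),
    gSaw x = (1 / 2) * σ x
      - ∑ n ∈ Finset.range N, (1 / 2 : ℝ) ^ (n + 2) * σ ((2 : ℝ) ^ (n + 1) * x)
      + (1 / 2 : ℝ) ^ (N + 1) * (gSaw ((2 : ℝ) ^ (N + 1) * x) - σ ((2 : ℝ) ^ (N + 1) * x)) := by
  intro N
  induction N with
  | zero =>
    intro x
    have h := gSaw_rec σ hper hodd hpos h0 h1 x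
    simp only [Finset.range_zero, Finset.sum_empty, pow_one, zero_add]
    rw [h]
    ring
  | succ N ih =>
    intro x
    have h := gSaw_rec σ hper hodd hpos h0 h1 ((2 : ℝ) ^ (N + 1) * x)
    have hp : 2 * ((2 : ℝ) ^ (N + 1) * x) = (2 : ℝ) ^ (N + 1 + 1) * x := by ring
    rw [hp] at h
    rw [ih x, Finset.sum_range_succ, h]
    ring

end Main

/-- Expansion of the sawtooth `x` on `(-1, 1)` in the base generated by the `2`-periodic
odd square wave `σ` (with `σ = 1` on `(0,1)`, `σ 0 = σ 1 = 0`): for every `x ∈ (-1, 1)`,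
the series `∑_{n ≥ 1} 2^{-(n+1)} σ(2ⁿ x)` converges and
`x = (1/2) σ(x) - ∑_{n ≥ 1} 2^{-(n+1)} σ(2ⁿ x)`. -/
theorem statement9 (σ : ℝ → ℝ) (hper : Function.Periodic σ 2)
    (hodd : ∀ x, σ (-x) = -σ x)
    (hpos : ∀ x : ℝ, 0 < x → x < 1 → σ x = 1)
    (h0 : σ 0 = 0) (h1 : σ 1 = 0) :
    ∀ x ∈ Set.Ioo (-1 : ℝ) 1,
      Summable (fun n : ℕ => (1 / 2 : ℝ) ^ (n + 2) * σ ((2 : ℝ) ^ (n + 1) * x)) ∧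
      x = (1 / 2) * σ x - ∑' n : ℕ, (1 / 2 : ℝ) ^ (n + 2) * σ ((2 : ℝ) ^ (n + 1) * x) := by
  intro x hx
  obtain ⟨hx1, hx2⟩ := hx
  have hσle := sigma_abs_le σ hper hodd hpos h0 h1
  have hgeo : Summable (fun n : ℕ => (1 / 2 : ℝ) ^ (n + 2)) := by
    have hg := (summable_geometric_of_lt_one (by norm_num : (0:ℝ) ≤ 1 / 2)
      (by norm_num)).mul_right ((1 / 2 : ℝ) ^ 2)
    exact hg.congr fun n => (pow_add (1 / 2 : ℝ) n 2).symm
  have hsum : Summable (fun n : ℕ => (1 / 2 : ℝ) ^ (n + 2) * σ ((2 : ℝ) ^ (n + 1) * x)) := by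
    refine Summable.of_norm_bounded hgeo fun n => ?_
    rw [norm_mul, norm_pow]
    have : ‖(1 / 2 : ℝ)‖ = 1 / 2 := by norm_num
    rw [this]
    calc (1 / 2 : ℝ) ^ (n + 2) * ‖σ ((2 : ℝ) ^ (n + 1) * x)‖
        ≤ (1 / 2 : ℝ) ^ (n + 2) * 1 := by
          apply mul_le_mul_of_nonneg_left (hσle _) (by positivity)
      _ = (1 / 2 : ℝ) ^ (n + 2) := by ring
  refine ⟨hsum, ?_⟩
  -- partial sums tend to (1/2) σ x - x
  have hkey := gSaw_key σ hper hodd hpos h0 h1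
  have hgx : gSaw x = x := gSaw_eq_self hx1 hx2
  have htend1 : Filter.Tendsto
      (fun N : ℕ => ∑ n ∈ Finset.range N, (1 / 2 : ℝ) ^ (n + 2) * σ ((2 : ℝ) ^ (n + 1) * x))
      Filter.atTop (nhds ((1 / 2) * σ x - x)) := by
    have heq : ∀ N : ℕ,
        (∑ n ∈ Finset.range N, (1 / 2 : ℝ) ^ (n + 2) * σ ((2 : ℝ) ^ (n + 1) * x))
          = (1 / 2) * σ x - x
            + (1 / 2 : ℝ) ^ (N + 1) * (gSaw ((2 : ℝ) ^ (N + 1) * x) - σ ((2 : ℝ) ^ (N + 1) * x)) := by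
      intro N
      have := hkey N x
      rw [hgx] at this
      linarith
    have hrem : Filter.Tendsto
        (fun N : ℕ => (1 / 2 : ℝ) ^ (N + 1)
          * (gSaw ((2 : ℝ) ^ (N + 1) * x) - σ ((2 : ℝ) ^ (N + 1) * x)))
        Filter.atTop (nhds 0) := by
      apply squeeze_zero_norm (a := fun N : ℕ => 2 * (1 / 2 : ℝ) ^ (N + 1))
      · intro N
        rw [norm_mul, norm_pow]
        have h12 : ‖(1 / 2 : ℝ)‖ = 1 / 2 := by norm_num
        rw [h12]
        have hb : ‖gSaw ((2 : ℝ) ^ (N + 1) * x) - σ ((2 : ℝ) ^ (N + 1) * x)‖ ≤ 2 := by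
          calc ‖gSaw ((2 : ℝ) ^ (N + 1) * x) - σ ((2 : ℝ) ^ (N + 1) * x)‖
              ≤ ‖gSaw ((2 : ℝ) ^ (N + 1) * x)‖ + ‖σ ((2 : ℝ) ^ (N + 1) * x)‖ := norm_sub_le _ _
            _ ≤ 1 + 1 := add_le_add (gSaw_abs_le _) (hσle _)
            _ = 2 := by norm_num
        calc (1 / 2 : ℝ) ^ (N + 1) * ‖gSaw ((2 : ℝ) ^ (N + 1) * x) - σ ((2 : ℝ) ^ (N + 1) * x)‖
            ≤ (1 / 2 : ℝ) ^ (N + 1) * 2 := mul_le_mul_of_nonneg_left hb (by positivity)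
          _ = 2 * (1 / 2 : ℝ) ^ (N + 1) := by ring
      · have h2 : Filter.Tendsto (fun N : ℕ => (1 / 2 : ℝ) ^ N) Filter.atTop (nhds 0) :=
          tendsto_pow_atTop_nhds_zero_of_lt_one (by norm_num) (by norm_num)
        have h3 : Filter.Tendsto (fun N : ℕ => (1 / 2 : ℝ) ^ (N + 1)) Filter.atTop (nhds 0) := by
          exact h2.comp (Filter.tendsto_add_atTop_nat 1)
        simpa using h3.const_mul 2
    have := Filter.Tendsto.add (tendsto_const_nhds
        (x := (1 / 2) * σ x - x) (f := Filter.atTop (α := ℕ))) hrem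
    rw [add_zero] at this
    exact this.congr fun N => (heq N).symm
  have htend2 := hsum.hasSum.tendsto_sum_nat
  have := tendsto_nhds_unique htend2 htend1
  rw [this]
  ring
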